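/- Let M be a real convex monoid, m ∈ M, and P ∈ D(M) with π(P) = m. Then IF(m) ≥ ∑_{x ∈ M} P(x)·IF(x), i.e., the invertible fraction is concave along convex decompositions. -/

import Mathlib

open Finsupp
open scoped Classical NNReal

/-- `p` is a finitely supported distribution: its values sum to `1`. -/
def IsDist {R X : Type*} [CommSemiring R] (p : X →₀ R) : Prop :=
  p.sum (fun _ r => r) = 1

/-- Convolution: `(q ∗ p)(m) = ∑_{g₂·g₁ = m} q(g₂) p(g₁)`. -/
noncomputable def dconv {R M : Type*} [CommSemiring R] [Monoid M]
    (q p : M →₀ R) : M →₀ R :=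
  q.sum fun g₂ b => p.sum fun g₁ a => Finsupp.single (g₂ * g₁) (b * a)

/-- The invertible support of `m`. -/
def Isupp {M : Type*} [Monoid M]
    (pm : (M →₀ ℝ≥0) → M) (m : M) : Set M :=
  {m' | IsUnit m' ∧ ∃ P : M →₀ ℝ≥0, IsDist P ∧ pm P = m ∧ P m' ≠ 0}

/-- `m` is weakly invertible if it is the image under `pm` of a distribution supported
on the units. -/
def WeaklyInv {M : Type*} [Monoid M]
    (pm : (M →₀ ℝ≥0) → M) (m : M) : Prop :=
  ∃ p : M →₀ ℝ≥0, IsDist p ∧ (∀ x ∈ p.support, IsUnit x) ∧ pm p = m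

/-- The total mass a distribution puts on the units of `M`. -/
noncomputable def unitMass {M : Type*} [Monoid M] (P : M →₀ ℝ≥0) : ℝ≥0 :=
  P.sum fun m' r => if IsUnit m' then r else 0

/-- The invertible fraction `IF(m) = sup {∑_{m'∈M*} P(m') : P ∈ D(M), pm(P) = m}`. -/
noncomputable def IF {M : Type*} [Monoid M]
    (pm : (M →₀ ℝ≥0) → M) (m : M) : ℝ≥0 :=
  sSup {s : ℝ≥0 | ∃ P : M →₀ ℝ≥0, IsDist P ∧ pm P = m ∧ s = unitMass P}

lemma IsDist_single {M : Type*} [Monoid M] (x : M) : IsDist (Finsupp.single x (1:ℝ≥0)) := by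
  simp [IsDist, Finsupp.sum_single_index]

lemma unitMass_le_one {M : Type*} [Monoid M] {P : M →₀ ℝ≥0} (hP : IsDist P) :
    unitMass P ≤ 1 := by
  rw [← hP]
  unfold unitMass Finsupp.sum
  apply Finset.sum_le_sum
  intro i _
  dsimp only
  split <;> simp

lemma unitMass_smul {M : Type*} [Monoid M] (r : ℝ≥0) (p : M →₀ ℝ≥0) :
    unitMass (r • p) = r * unitMass p := by
  unfold unitMass
  rw [Finsupp.sum_smul_index' (fun i => by simp), Finsupp.mul_sum]
  congr 1
  funext i c
  simp [mul_ite, smul_eq_mul]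

lemma exists_near {M : Type*} [Monoid M] (pm : (M →₀ ℝ≥0) → M)
    (hδ : ∀ m : M, pm (Finsupp.single m 1) = m) (x : M) {ε : ℝ≥0} (hε : 0 < ε) :
    ∃ q : M →₀ ℝ≥0, IsDist q ∧ pm q = x ∧ IF pm x ≤ unitMass q + ε := by
  have hne : {s : ℝ≥0 | ∃ P : M →₀ ℝ≥0, IsDist P ∧ pm P = x ∧ s = unitMass P}.Nonempty :=
    ⟨unitMass (Finsupp.single x 1), Finsupp.single x 1, IsDist_single x, hδ x, rfl⟩
  by_cases h : IF pm x ≤ ε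
  · exact ⟨Finsupp.single x 1, IsDist_single x, hδ x, h.trans le_add_self⟩
  · push_neg at h
    have h1 : IF pm x - ε < IF pm x := tsub_lt_self (hε.trans h) hε
    obtain ⟨s, hsS, hs⟩ := exists_lt_of_lt_csSup hne h1
    obtain ⟨q, hq1, hq2, rfl⟩ := hsS
    exact ⟨q, hq1, hq2, ((tsub_lt_iff_right h.le).mp hs).le⟩

/-- In a real convex monoid, for any distribution `P` with `pm(P) = m` one has
`IF(m) ≥ ∑_x P(x)·IF(x)`: the invertible fraction is concave along convex
decompositions. -/
theorem IF_concave {M : Type*} [Monoid M]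
    (pm : (M →₀ ℝ≥0) → M)
    (hδ : ∀ m : M, pm (Finsupp.single m 1) = m)
    (hμ : ∀ Q : (M →₀ ℝ≥0) →₀ ℝ≥0, IsDist Q → (∀ p ∈ Q.support, IsDist p) →
      pm (Q.sum fun p r => r • p) = pm (Finsupp.mapDomain pm Q))
    (hmul : ∀ p q : M →₀ ℝ≥0, IsDist p → IsDist q → pm (dconv q p) = pm q * pm p)
    (m : M) (P : M →₀ ℝ≥0) (hP : IsDist P) (hPm : pm P = m) :
    (P.sum fun x r => r * IF pm x) ≤ IF pm m := by
  apply le_of_forall_pos_le_add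
  intro ε hε
  choose Q hQdist hQpm hQnear using fun x => exists_near pm hδ x hε
  set T : M →₀ ℝ≥0 := P.sum fun x r => r • Q x with hT
  have hTdist : IsDist T := by
    unfold IsDist
    rw [hT, Finsupp.sum_sum_index (fun a => rfl) (fun a b c => rfl)]
    rw [← hP]
    apply Finsupp.sum_congr
    intro x hx
    rw [Finsupp.sum_smul_index' (fun i => rfl)]
    have hd := hQdist x
    unfold IsDist at hd
    calc (Q x).sum (fun _ c => P x • c) = P x * (Q x).sum fun _ r => r := by
          rw [Finsupp.mul_sum]; simp [smul_eq_mul]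
      _ = P x := by rw [hd, mul_one]
  have hTm : pm T = m := by
    have hmap : T = (Finsupp.mapDomain Q P).sum fun p r => r • p := by
      rw [Finsupp.sum_mapDomain_index (fun b => zero_smul ℝ≥0 b)
        (fun b m1 m2 => add_smul m1 m2 b)]
    have hdist' : IsDist (Finsupp.mapDomain Q P) := by
      unfold IsDist
      rw [Finsupp.sum_mapDomain_index (fun b => rfl) (fun b m1 m2 => rfl)]
      exact hP
    have hsupp : ∀ p ∈ (Finsupp.mapDomain Q P).support, IsDist p := by
      intro p hp
      obtain ⟨x, -, rfl⟩ := Finset.mem_image.mp (Finsupp.mapDomain_support hp)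
      exact hQdist x
    rw [hmap, hμ _ hdist' hsupp, ← Finsupp.mapDomain_comp]
    have hid : pm ∘ Q = id := funext fun x => hQpm x
    rw [hid, Finsupp.mapDomain_id, hPm]
  have hTmass : unitMass T = P.sum fun x r => r * unitMass (Q x) := by
    unfold unitMass
    rw [hT, Finsupp.sum_sum_index (fun a => by simp) (fun a b c => by split <;> simp)]
    apply Finsupp.sum_congr
    intro x hx
    exact unitMass_smul (P x) (Q x)
  have hle : unitMass T ≤ IF pm m := by
    apply le_csSup
    · exact ⟨1, fun s hs => by obtain ⟨p, hp, -, rfl⟩ := hs; exact unitMass_le_one hp⟩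
    · exact ⟨T, hTdist, hTm, rfl⟩
  calc (P.sum fun x r => r * IF pm x)
      ≤ P.sum fun x r => r * (unitMass (Q x) + ε) := by
        apply Finset.sum_le_sum
        intro x hx
        exact mul_le_mul_right (hQnear x) _
    _ = (P.sum fun x r => r * unitMass (Q x)) + (P.sum fun x r => r * ε) := by
        unfold Finsupp.sum
        rw [← Finset.sum_add_distrib]
        apply Finset.sum_congr rfl
        intro x hx
        ring
    _ = unitMass T + ε := by
        rw [← hTmass]
        congr 1
        have h2 : (P.sum fun x r => r * ε) = (P.sum fun x r => r) * ε := by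
          unfold Finsupp.sum
          rw [Finset.sum_mul]
        rw [h2, hP, one_mul]
    _ ≤ IF pm m + ε := add_le_add_left hle _
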